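/- arXiv:1904.00366 — 3 statements merged into one kernel-verified Lean document; each statement's English description precedes it below -/
import Mathlib

section
/- Let X be a compact metric space and f : X → X continuous such that f|_{CR(f)} : CR(f) → CR(f) has the shadowing property. If (x, y) ∈ CR(f)² with x ≠ y and x ~ y (chain relation), then x and y can be distinguished by a positive-entropy open cover: for every ε with 0 < ε < d(x,y)/2 there exists a positive integer a such that h(f, {B_ε(x)^c, B_ε(y)^c}) ≥ (1/a)·log 2 > 0, where B_ε denotes the open ε-ball. In particular (x, y) is an entropy pair for f. -/
open Metric Filter Set
open scoped Classical

section Defs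

variable {X : Type*} [MetricSpace X]

/-- `(c i)_{i=0}^k` is a δ-chain of `f`. -/
def IsChain' (f : X → X) (δ : ℝ) (c : ℕ → X) (k : ℕ) : Prop :=
  ∀ i < k, dist (f (c i)) (c (i + 1)) ≤ δ

/-- The chain recurrent set of `f`. -/
def CR (f : X → X) : Set X :=
  {x | ∀ δ > 0, ∃ k > 0, ∃ c : ℕ → X, IsChain' f δ c k ∧ c 0 = x ∧ c k = x}

/-- The chain relation `~` on `CR f`. -/
def ChainRel (f : X → X) (x y : X) : Prop :=
  ∀ δ > 0, ∃ m > 0, ∃ N > 0, ∀ n ≥ N,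
    (∃ c : ℕ → X, IsChain' f δ c (m * n) ∧ (∀ i ≤ m * n, c i ∈ CR f) ∧
      c 0 = x ∧ c (m * n) = y) ∧
    (∃ c : ℕ → X, IsChain' f δ c (m * n) ∧ (∀ i ≤ m * n, c i ∈ CR f) ∧
      c 0 = y ∧ c (m * n) = x)

/-- Property* for a pair `(z, w)`, with cycles lying in `CR f`. -/
def PropertyStar (f : X → X) (z w : X) : Prop :=
  ∃ r > 0, ∀ δ > 0, ∃ k > 0, ∃ c c' : ℕ → X,
    IsChain' f δ c k ∧ IsChain' f δ c' k ∧
    (∀ i ≤ k, c i ∈ CR f) ∧ (∀ i ≤ k, c' i ∈ CR f) ∧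
    c 0 = z ∧ c k = z ∧ c' 0 = w ∧ c' k = w ∧
    ∀ i ≤ k, dist (c i) (c' i) > r

/-- Property* for a pair `(z, w)` (cycles not required to lie in `CR f`). -/
def PropertyStar' (f : X → X) (z w : X) : Prop :=
  ∃ r > 0, ∀ δ > 0, ∃ k > 0, ∃ c c' : ℕ → X,
    IsChain' f δ c k ∧ IsChain' f δ c' k ∧
    c 0 = z ∧ c k = z ∧ c' 0 = w ∧ c' k = w ∧
    ∀ i ≤ k, dist (c i) (c' i) > r

/-- Omega-limit set of the point `(x, y)` under `f × f`. -/
def OmegaLimit2 (f : X → X) (x y : X) : Set (X × X) :=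
  {p | ∃ φ : ℕ → ℕ, StrictMono φ ∧
    Tendsto (fun n => (f^[φ n] x, f^[φ n] y)) atTop (nhds p)}

/-- Omega-limit set of a point under `f`. -/
def OmegaLimit1 (f : X → X) (x : X) : Set X :=
  {p | ∃ φ : ℕ → ℕ, StrictMono φ ∧ Tendsto (fun n => f^[φ n] x) atTop (nhds p)}

/-- `(x, y)` is a DC1-pair for `f`. -/
def DC1Pair (f : X → X) (x y : X) : Prop :=
  (∀ δ > 0, Filter.limsup (fun n : ℕ =>
      (((Finset.range n).filter fun i => dist (f^[i] x) (f^[i] y) < δ).card : ℝ) / n)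
      Filter.atTop = 1) ∧
  (∃ δ₀ > 0, Filter.limsup (fun n : ℕ =>
      (((Finset.range n).filter fun i => dist (f^[i] x) (f^[i] y) > δ₀).card : ℝ) / n)
      Filter.atTop = 1)

/-- `f` exhibits distributional chaos of type 1. -/
def ExhibitsDC1 (f : X → X) : Prop :=
  ∃ S : Set X, ¬ S.Countable ∧ ∀ x ∈ S, ∀ y ∈ S, x ≠ y → DC1Pair f x y

/-- `(x, y)` is a Li-Yorke pair for `f`. -/
def LiYorkePair (f : X → X) (x y : X) : Prop :=
  Filter.liminf (fun n => dist (f^[n] x) (f^[n] y)) Filter.atTop = 0 ∧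
  Filter.limsup (fun n => dist (f^[n] x) (f^[n] y)) Filter.atTop > 0

/-- `(x, y)` is a proximal pair for `f`. -/
def ProximalPair (f : X → X) (x y : X) : Prop :=
  Filter.liminf (fun n => dist (f^[n] x) (f^[n] y)) Filter.atTop = 0

/-- `(x, y)` is a distal pair for `f`. -/
def DistalPair (f : X → X) (x y : X) : Prop :=
  0 < ⨅ n : ℕ, dist (f^[n] x) (f^[n] y)

/-- `f` has the limit shadowing property. -/
def LimitShadowing (f : X → X) : Prop :=
  ∀ x : ℕ → X, Tendsto (fun i => dist (f (x i)) (x (i + 1))) atTop (nhds 0) →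
    ∃ p : X, Tendsto (fun i => dist (f^[i] p) (x i)) atTop (nhds 0)

/-- The restriction of `f` to `CR f` has the shadowing property. -/
def ShadowingOnCR (f : X → X) : Prop :=
  ∀ ε > 0, ∃ δ > 0, ∀ x : ℕ → X, (∀ i, x i ∈ CR f) →
    (∀ i, dist (f (x i)) (x (i + 1)) ≤ δ) →
    ∃ p ∈ CR f, ∀ i, dist (f^[i] p) (x i) ≤ ε

/-- Topological entropy of `f` relative to the cover `U`. -/
noncomputable def entropyOfCover (f : X → X) {ι : Type*} (U : ι → Set X) : ℝ :=
  Filter.limsup (fun n : ℕ =>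
    Real.log ((sInf {m : ℕ | ∃ s : Finset (Fin n → ι), s.card = m ∧
      (⋃ g ∈ s, ⋂ i : Fin n, f^[(i : ℕ)] ⁻¹' U (g i)) = Set.univ} : ℕ) : ℝ) / n)
    Filter.atTop

/-- `(x, y)` is an entropy pair for `f`. -/
def EntropyPair (f : X → X) (x y : X) : Prop :=
  x ≠ y ∧ ∀ A B : Set X, IsClosed A → IsClosed B → x ∈ interior A → y ∈ interior B →
    Disjoint A B → 0 < entropyOfCover f (fun b : Bool => if b then Aᶜ else Bᶜ)

end Defs

section Aux

variable {X : Type*} [MetricSpace X]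

noncomputable def catC (c1 c2 : ℕ → X) (k1 : ℕ) : ℕ → X :=
  fun i => if i < k1 then c1 i else c2 (i - k1)

lemma catC_spec {f : X → X} {δ : ℝ} {c1 c2 : ℕ → X} {k1 k2 : ℕ}
    (h1 : IsChain' f δ c1 k1) (h2 : IsChain' f δ c2 k2)
    (m1 : ∀ i ≤ k1, c1 i ∈ CR f) (m2 : ∀ i ≤ k2, c2 i ∈ CR f)
    (hj : c1 k1 = c2 0) :
    IsChain' f δ (catC c1 c2 k1) (k1 + k2) ∧
    (∀ i ≤ k1 + k2, catC c1 c2 k1 i ∈ CR f) ∧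
    catC c1 c2 k1 0 = c1 0 ∧ catC c1 c2 k1 (k1 + k2) = c2 k2 := by
  have hval : ∀ i, i ≤ k1 → catC c1 c2 k1 i = c1 i := by
    intro i hi
    unfold catC
    rcases lt_or_eq_of_le hi with h | h
    · simp [h]
    · subst h
      simp [hj.symm]
  have hval2 : ∀ i, k1 ≤ i → catC c1 c2 k1 i = c2 (i - k1) := by
    intro i hi
    unfold catC
    rcases lt_or_eq_of_le hi with h | h
    · simp [Nat.lt_irrefl, not_lt.mpr hi]
    · subst h
      simp
  refine ⟨?_, ?_, hval 0 (Nat.zero_le _), by rw [hval2 _ (Nat.le_add_right _ _)]; congr 1; omega⟩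
  · intro i hi
    by_cases hik : i < k1
    · rw [hval i hik.le, hval (i+1) hik]
      exact h1 i hik
    · rw [hval2 i (by omega), hval2 (i+1) (by omega)]
      have : i + 1 - k1 = (i - k1) + 1 := by omega
      rw [this]
      exact h2 (i - k1) (by omega)
  · intro i hi
    by_cases hik : i ≤ k1
    · rw [hval i hik]; exact m1 i hik
    · rw [hval2 i (by omega)]; exact m2 _ (by omega)


lemma exists_shadow_points (f : X → X) (h : ShadowingOnCR f)
    (x y : X) (hrel : ChainRel f x y) {ε : ℝ} (hε : 0 < ε) :
    ∃ L : ℕ, 0 < L ∧ ∃ p : (ℕ → Bool) → X,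
      ∀ s : ℕ → Bool, ∀ j : ℕ,
        dist (f^[j * L] (p s)) (if s j then x else y) < ε := by
  obtain ⟨δ, hδ, hsh⟩ := h (ε/2) (by positivity)
  obtain ⟨m, hm, N, hN, hc⟩ := hrel δ hδ
  set K := m * N with hK
  have hK0 : 0 < K := Nat.mul_pos hm hN
  set L := K + K with hLdef
  have hL0 : 0 < L := by omega
  obtain ⟨⟨cxy, hcxy, mxy, hxy0, hxyK⟩, ⟨cyx, hcyx, myx, hyx0, hyxK⟩⟩ := hc N le_rfl
  have hLe : m * (2 * N) = L := by rw [hLdef, hK]; ring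
  obtain ⟨⟨cxy2, hcxy2, mxy2, hxy20, hxy2K⟩, ⟨cyx2, hcyx2, myx2, hyx20, hyx2K⟩⟩ :=
    hc (2 * N) (by omega)
  rw [hLe] at hcxy2 mxy2 hxy2K hcyx2 myx2 hyx2K
  have blocks : ∀ b b' : Bool, ∃ c : ℕ → X, IsChain' f δ c L ∧
      (∀ i ≤ L, c i ∈ CR f) ∧ c 0 = (if b then x else y) ∧
      c L = (if b' then x else y) := by
    intro b b'
    cases b <;> cases b'
    · -- y → y
      obtain ⟨h1, h2, h3, h4⟩ := catC_spec hcyx hcxy myx mxy (hyxK.trans hxy0.symm)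
      exact ⟨_, h1, h2, by simp [h3, hyx0], by simp [hLdef, hK, h4, hxyK]⟩
    · -- y → x
      exact ⟨cyx2, hcyx2, myx2, by simp [hyx20], by simp [hyx2K]⟩
    · -- x → y
      exact ⟨cxy2, hcxy2, mxy2, by simp [hxy20], by simp [hxy2K]⟩
    · -- x → x
      obtain ⟨h1, h2, h3, h4⟩ := catC_spec hcxy hcyx mxy myx (hxyK.trans hyx0.symm)
      exact ⟨_, h1, h2, by simp [h3, hxy0], by simp [hLdef, hK, h4, hyxK]⟩
  choose blk hblk1 hblk2 hblk3 hblk4 using blocks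
  have key : ∀ s : ℕ → Bool, ∃ p ∈ CR f,
      ∀ i, dist (f^[i] p) (blk (s (i / L)) (s (i / L + 1)) (i % L)) ≤ ε / 2 := by
    intro s
    apply hsh
    · intro i
      exact hblk2 _ _ _ (Nat.le_of_lt (Nat.mod_lt _ hL0))
    · intro i
      have hq := Nat.div_add_mod i L
      by_cases hcase : i % L + 1 < L
      · have hi1 : i + 1 = L * (i / L) + (i % L + 1) := by omega
        have e1 : (i + 1) / L = i / L := by
          rw [hi1, Nat.mul_add_div hL0, Nat.div_eq_of_lt hcase, Nat.add_zero]
        have e2 : (i + 1) % L = i % L + 1 := by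
          rw [hi1, Nat.mul_add_mod, Nat.mod_eq_of_lt hcase]
        rw [e1, e2]
        exact hblk1 _ _ (i % L) (Nat.mod_lt _ hL0)
      · have hr : i % L < L := Nat.mod_lt _ hL0
        have hrL : i % L + 1 = L := by omega
        have hi1 : i + 1 = L * (i / L + 1) := by
          rw [Nat.mul_add, Nat.mul_one]; omega
        have e1 : (i + 1) / L = i / L + 1 := by
          rw [hi1, Nat.mul_div_cancel_left _ hL0]
        have e2 : (i + 1) % L = 0 := by
          rw [hi1, Nat.mul_mod_right]
        rw [e1, e2, hblk3]
        have := hblk1 (s (i / L)) (s (i / L + 1)) (i % L) hr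
        rw [hrL, hblk4] at this
        exact this
  choose p hpCR hp using key
  refine ⟨L, hL0, p, ?_⟩
  intro s j
  have h1 := hp s (j * L)
  rw [Nat.mul_div_cancel _ hL0, Nat.mul_mod_left, hblk3] at h1
  linarith

lemma entropy_lower (f : X → X) (U : Bool → Set X) {L : ℕ} (hL : 0 < L)
    (p : (ℕ → Bool) → X)
    (hp : ∀ s : ℕ → Bool, ∀ j : ℕ, f^[j * L] (p s) ∉ U (s j))
    (hcov : ∀ z : X, z ∈ U true ∪ U false) :
    Real.log 2 / L ≤ entropyOfCover f U := by
  set S : ℕ → Set ℕ := fun n => {m : ℕ | ∃ s : Finset (Fin n → Bool), s.card = m ∧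
      (⋃ g ∈ s, ⋂ i : Fin n, f^[(i : ℕ)] ⁻¹' U (g i)) = Set.univ} with hS
  have mem_top : ∀ n, 2 ^ n ∈ S n := by
    intro n
    refine ⟨Finset.univ, by simp [Fintype.card_fun], ?_⟩
    ext z
    simp only [Set.mem_iUnion, Set.mem_iInter, Set.mem_preimage, Set.mem_univ, iff_true,
      Finset.mem_univ, exists_true_left]
    refine ⟨fun i => if f^[(i : ℕ)] z ∈ U true then true else false, fun i => ?_⟩
    by_cases hz : f^[(i : ℕ)] z ∈ U true
    · simpa [hz] using hz
    · have := hcov (f^[(i : ℕ)] z)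
      simp only [Set.mem_union] at this
      simp [hz, this.resolve_left hz]
  have lower : ∀ n, 1 ≤ n → ∀ m ∈ S n, 2 ^ ((n - 1) / L + 1) ≤ m := by
    intro n hn m hm
    obtain ⟨s, hcard, hcov'⟩ := hm
    set M := (n - 1) / L + 1 with hM
    have hjn : ∀ j : Fin M, (j : ℕ) * L < n := by
      intro j
      have hj1 : (j : ℕ) ≤ (n - 1) / L := by have := j.2; omega
      calc (j : ℕ) * L ≤ (n - 1) / L * L := Nat.mul_le_mul_right _ hj1
        _ ≤ n - 1 := Nat.div_mul_le_self _ _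
        _ < n := by omega
    set extend : (Fin M → Bool) → (ℕ → Bool) :=
      fun t j => if hj : j < M then t ⟨j, hj⟩ else true with hextend
    have hg0 : ∀ t : Fin M → Bool, ∃ g ∈ s,
        ∀ i : Fin n, f^[(i : ℕ)] (p (extend t)) ∈ U (g i) := by
      intro t
      have : p (extend t) ∈ ⋃ g ∈ s, ⋂ i : Fin n, f^[(i : ℕ)] ⁻¹' U (g i) := by
        rw [hcov']; trivial
      simpa only [Set.mem_iUnion, Set.mem_iInter, Set.mem_preimage, exists_prop] using this
    choose g hgs hgU using hg0
    have hval : ∀ t : Fin M → Bool, ∀ j : Fin M,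
        g t ⟨(j : ℕ) * L, hjn j⟩ = ! t j := by
      intro t j
      have h1 := hgU t ⟨(j : ℕ) * L, hjn j⟩
      have h2 := hp (extend t) (j : ℕ)
      have he : extend t (j : ℕ) = t j := by
        rw [hextend]; simp [j.2]
      rw [he] at h2
      revert h1 h2
      cases hb : t j <;> cases hb' : g t ⟨(j : ℕ) * L, hjn j⟩ <;> simp_all
    have hinj : Set.InjOn g (Finset.univ : Finset (Fin M → Bool)) := by
      intro t _ t' _ hgt
      funext j
      have := hval t j
      rw [hgt, hval t' j] at this
      simpa using this.symm
    have hcard2 : (Finset.univ : Finset (Fin M → Bool)).card ≤ s.card :=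
      Finset.card_le_card_of_injOn g (fun t _ => hgs t) hinj
    calc 2 ^ M = (Finset.univ : Finset (Fin M → Bool)).card := by
          simp [Fintype.card_fun]
      _ ≤ s.card := hcard2
      _ = m := hcard
  have hSne : ∀ n, (S n).Nonempty := fun n => ⟨2 ^ n, mem_top n⟩
  set m₀ : ℕ → ℕ := fun n => sInf (S n) with hm₀
  have hup : ∀ n, m₀ n ≤ 2 ^ n := fun n => Nat.sInf_le (mem_top n)
  have hlo : ∀ n, 1 ≤ n → 2 ^ ((n - 1) / L + 1) ≤ m₀ n := by
    intro n hn
    exact lower n hn _ (Nat.sInf_mem (hSne n))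
  show Real.log 2 / L ≤ Filter.limsup (fun n : ℕ => Real.log ((m₀ n : ℕ) : ℝ) / n) Filter.atTop
  have hlog2 : (0 : ℝ) < Real.log 2 := Real.log_pos one_lt_two
  apply Filter.le_limsup_of_frequently_le
  · apply Filter.Eventually.frequently
    filter_upwards [Filter.eventually_ge_atTop 1] with n hn
    set M := (n - 1) / L + 1 with hM
    have hnML : n ≤ M * L := by
      have e := Nat.div_add_mod (n - 1) L
      have hr : (n - 1) % L < L := Nat.mod_lt _ hL
      have : M * L = (n - 1) / L * L + L := by rw [hM]; ring
      rw [this, Nat.mul_comm]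
      omega
    have hpos : (0 : ℝ) < (n : ℝ) := by exact_mod_cast hn
    have h2M : ((2 : ℝ) ^ M) ≤ ((m₀ n : ℕ) : ℝ) := by
      exact_mod_cast hlo n hn
    have hlogle : (M : ℝ) * Real.log 2 ≤ Real.log ((m₀ n : ℕ) : ℝ) := by
      rw [← Real.log_pow]
      exact Real.log_le_log (by positivity) h2M
    have step1 : Real.log 2 / (L : ℝ) ≤ (M : ℝ) * Real.log 2 / (n : ℝ) := by
      rw [div_le_div_iff₀ (by exact_mod_cast hL) hpos]
      have : (n : ℝ) ≤ (M : ℝ) * (L : ℝ) := by exact_mod_cast hnML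
      nlinarith
    calc Real.log 2 / (L : ℝ) ≤ (M : ℝ) * Real.log 2 / (n : ℝ) := step1
      _ ≤ Real.log ((m₀ n : ℕ) : ℝ) / (n : ℝ) := by
          gcongr
  · refine Filter.isBoundedUnder_of ⟨Real.log 2, fun n => ?_⟩
    by_cases hn : n = 0
    · subst hn
      simp [Real.log_nonneg one_le_two]
    · have hn1 : 1 ≤ n := by omega
      have hpos : (0 : ℝ) < (n : ℝ) := by exact_mod_cast Nat.pos_of_ne_zero hn
      have h1 : (1 : ℝ) ≤ ((m₀ n : ℕ) : ℝ) := by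
        have := hlo n hn1
        have h1' : 1 ≤ m₀ n := le_trans (Nat.one_le_two_pow) this
        exact_mod_cast h1'
      have h2 : ((m₀ n : ℕ) : ℝ) ≤ (2 : ℝ) ^ n := by exact_mod_cast hup n
      have : Real.log ((m₀ n : ℕ) : ℝ) ≤ (n : ℝ) * Real.log 2 := by
        rw [← Real.log_pow]
        exact Real.log_le_log (by linarith) h2
      rw [div_le_iff₀ hpos]
      nlinarith [Real.log_nonneg (le_refl (1:ℝ))]
  

end Aux

/-- under shadowing on `CR f`, chain related distinct points
are entropy pairs, with a quantitative entropy bound. -/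
theorem chainRel_entropyPair {X : Type*} [MetricSpace X] [CompactSpace X]
    (f : X → X) (hf : Continuous f) (h : ShadowingOnCR f) (x y : X)
    (hx : x ∈ CR f) (hy : y ∈ CR f) (hne : x ≠ y) (hrel : ChainRel f x y) :
    (∀ ε : ℝ, 0 < ε → ε < dist x y / 2 → ∃ a : ℕ, 0 < a ∧
      0 < Real.log 2 / a ∧
      Real.log 2 / a ≤ entropyOfCover f
        (fun b : Bool => if b then (Metric.ball x ε)ᶜ else (Metric.ball y ε)ᶜ)) ∧
    EntropyPair f x y := by
  constructor
  · intro ε hε hεd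
    obtain ⟨L, hL0, p, hp⟩ := exists_shadow_points f h x y hrel hε
    refine ⟨L, hL0, div_pos (Real.log_pos one_lt_two) (by exact_mod_cast hL0), ?_⟩
    have e1 : (if (true : Bool) then (Metric.ball x ε)ᶜ else (Metric.ball y ε)ᶜ)
        = (Metric.ball x ε)ᶜ := by simp
    have e2 : (if (false : Bool) then (Metric.ball x ε)ᶜ else (Metric.ball y ε)ᶜ)
        = (Metric.ball y ε)ᶜ := by simp
    apply entropy_lower f _ hL0 p
    · intro s j
      have hd := hp s j
      cases hb : s j
      · rw [hb] at hd
        simp only [if_neg (Bool.false_ne_true)] at hd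
        rw [e2]
        simp only [Set.mem_compl_iff, not_not]
        exact Metric.mem_ball.mpr hd
      · rw [hb] at hd
        simp only [if_pos rfl] at hd
        rw [e1]
        simp only [Set.mem_compl_iff, not_not]
        exact Metric.mem_ball.mpr hd
    · intro z
      rw [Set.mem_union, e1, e2]
      by_cases h1 : z ∈ Metric.ball x ε
      · right
        simp only [Set.mem_compl_iff]
        intro h2
        rw [Metric.mem_ball] at h1 h2
        have htri : dist x y ≤ dist x z + dist z y := dist_triangle _ _ _
        rw [dist_comm x z] at htri
        linarith
      · exact Or.inl h1
  · refine ⟨hne, ?_⟩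
    intro A B hA hB hxA hyB hAB
    have hdxy : 0 < dist x y := dist_pos.mpr hne
    obtain ⟨ε₁, hε₁, hball₁⟩ := Metric.isOpen_iff.mp isOpen_interior x hxA
    obtain ⟨ε₂, hε₂, hball₂⟩ := Metric.isOpen_iff.mp isOpen_interior y hyB
    set ε := min (min ε₁ ε₂) (dist x y / 4) with hεdef
    have hε : 0 < ε := lt_min (lt_min hε₁ hε₂) (by linarith)
    obtain ⟨L, hL0, p, hp⟩ := exists_shadow_points f h x y hrel hε
    have hbx : Metric.ball x ε ⊆ A := fun z hz =>
      interior_subset (hball₁ (Metric.ball_subset_ball (le_trans (min_le_left _ _) (min_le_left _ _)) hz))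
    have hby : Metric.ball y ε ⊆ B := fun z hz =>
      interior_subset (hball₂ (Metric.ball_subset_ball (le_trans (min_le_left _ _) (min_le_right _ _)) hz))
    have key := entropy_lower f (fun b : Bool => if b then Aᶜ else Bᶜ) hL0 p ?_ ?_
    · calc (0 : ℝ) < Real.log 2 / L :=
            div_pos (Real.log_pos one_lt_two) (by exact_mod_cast hL0)
        _ ≤ _ := key
    · intro s j
      have hd := hp s j
      have e1 : (if (true : Bool) then Aᶜ else Bᶜ) = Aᶜ := by simp
      have e2 : (if (false : Bool) then Aᶜ else Bᶜ) = Bᶜ := by simp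
      cases hb : s j
      · rw [hb] at hd
        simp only [if_neg (Bool.false_ne_true)] at hd
        show f^[j * L] (p s) ∉ (if (false : Bool) then Aᶜ else Bᶜ)
        rw [e2]
        simp only [Set.mem_compl_iff, not_not]
        exact hby (Metric.mem_ball.mpr hd)
      · rw [hb] at hd
        rw [if_pos rfl] at hd
        show f^[j * L] (p s) ∉ (if (true : Bool) then Aᶜ else Bᶜ)
        rw [e1]
        simp only [Set.mem_compl_iff, not_not]
        exact hbx (Metric.mem_ball.mpr hd)
    · intro z
      have e1 : (if (true : Bool) then Aᶜ else Bᶜ) = Aᶜ := by simp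
      have e2 : (if (false : Bool) then Aᶜ else Bᶜ) = Bᶜ := by simp
      show z ∈ (if (true : Bool) then Aᶜ else Bᶜ) ∪ (if (false : Bool) then Aᶜ else Bᶜ)
      rw [Set.mem_union, e1, e2]
      by_cases h1 : z ∈ A
      · right
        exact fun h2 => Set.disjoint_left.mp hAB h1 h2
      · exact Or.inl h1
end

section
/- Let X be a compact metric space and f : X → X a continuous map with the limit shadowing property. If f exhibits DC1 (in fact if f has at least one Li-Yorke pair) then h_top(f) > 0. -/
open Metric Filter Set
open scoped Classical

section AuxLemmas
open scoped ENNReal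

variable {Y : Type*} [MetricSpace Y]

lemma chain_append (g : Y → Y) (δ : ℝ) (Z : Set Y) (c d : ℕ → Y) (n m : ℕ)
    (hc : IsChain' g δ c n) (hd : IsChain' g δ d m)
    (hcZ : ∀ i ≤ n, c i ∈ Z) (hdZ : ∀ i ≤ m, d i ∈ Z) (hend : c n = d 0) :
    ∃ e : ℕ → Y, IsChain' g δ e (n + m) ∧ (∀ i ≤ n + m, e i ∈ Z) ∧
      (∀ i ≤ n, e i = c i) ∧ (∀ i, n ≤ i → e i = d (i - n)) := by
  refine ⟨fun i => if i < n then c i else d (i - n), ?_, ?_, ?_, ?_⟩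
  · intro i hi
    by_cases h : i + 1 ≤ n
    · have hi' : i < n := h
      simp only [if_pos hi']
      rcases lt_or_eq_of_le h with h' | h'
      · simp only [if_pos h']
        exact hc i hi'
      · subst h'
        simp only [if_neg (lt_irrefl (i+1)), Nat.sub_self, ← hend]
        exact hc i hi'
    · push_neg at h
      have hn : n ≤ i := Nat.lt_succ_iff.mp h
      have h1 : ¬ i + 1 < n := by omega
      have h2 : i + 1 - n = (i - n) + 1 := by omega
      have h3 : i - n < m := by omega
      by_cases h0 : i < n
      · omega
      · simp only [if_neg h0, if_neg h1, h2]
        exact hd _ h3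
  · intro i hi
    by_cases h : i < n
    · simpa only [if_pos h] using hcZ i h.le
    · have : i - n ≤ m := by omega
      simpa only [if_neg h] using hdZ _ this
  · intro i hi
    rcases lt_or_eq_of_le hi with h | h
    · simp [h]
    · simp [h, ← hend]
  · intro i hi
    rcases lt_or_eq_of_le hi with h | h
    · simp [Nat.lt_irrefl, not_lt.mpr hi, Nat.not_lt.mpr hi]
    · simp [← h, hend]

lemma omega_attract [CompactSpace Y] (g : Y → Y) (x0 : Y) {δ : ℝ} (hδ : 0 < δ) :
    ∃ N : ℕ, ∀ n ≥ N, ∃ w ∈ OmegaLimit1 g x0, dist (g^[n] x0) w ≤ δ := by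
  by_contra hcon
  push_neg at hcon
  have hfreq : ∃ᶠ n in atTop, ∀ w ∈ OmegaLimit1 g x0, δ < dist (g^[n] x0) w := by
    rw [frequently_atTop]
    intro N
    obtain ⟨n, hn, h⟩ := hcon N
    exact ⟨n, hn, fun w hw => h w hw⟩
  obtain ⟨φ, hφ, hP⟩ := extraction_of_frequently_atTop hfreq
  obtain ⟨w, -, ψ, hψ, hw⟩ := isCompact_univ.tendsto_subseq
    (x := fun n => g^[φ n] x0) (fun n => mem_univ _)
  have hwmem : w ∈ OmegaLimit1 g x0 := ⟨φ ∘ ψ, hφ.comp hψ, hw⟩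
  have hd : Tendsto (fun n => dist (g^[φ (ψ n)] x0) w) atTop (nhds 0) := by
    simpa using hw.dist (tendsto_const_nhds (x := w))
  have := (hd.eventually (gt_mem_nhds hδ)).exists
  obtain ⟨n, hn⟩ := this
  exact absurd hn (not_lt.mpr (hP (ψ n) w hwmem).le)

lemma omega_chain [CompactSpace Y] {g : Y → Y} (hg : Continuous g) (x0 : Y)
    {u v : Y} (hu : u ∈ OmegaLimit1 g x0) (hv : v ∈ OmegaLimit1 g x0)
    {δ : ℝ} (hδ : 0 < δ) :
    ∃ L, 1 ≤ L ∧ ∃ c : ℕ → Y, (∀ i ≤ L, c i ∈ OmegaLimit1 g x0) ∧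
      IsChain' g δ c L ∧ c 0 = u ∧ c L = v := by
  -- uniform continuity modulus
  obtain ⟨δ'', hδ''pos, hδ''⟩ := Metric.uniformContinuous_iff.mp
    (CompactSpace.uniformContinuous_of_continuous hg) (δ/3) (by linarith)
  set δ' : ℝ := min (δ/3) (δ''/2) with hδ'def
  have hδ'pos : 0 < δ' := lt_min (by linarith) (by linarith)
  have hδ'1 : δ' ≤ δ/3 := min_le_left _ _
  have hδ'2 : δ' < δ'' := lt_of_le_of_lt (min_le_right _ _) (by linarith)
  obtain ⟨N, hN⟩ := omega_attract g x0 hδ'pos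
  obtain ⟨φ, hφ, hφt⟩ := hu
  obtain ⟨ψ, hψ, hψt⟩ := hv
  -- pick approach times
  obtain ⟨K₁, hK₁⟩ := Metric.tendsto_atTop.mp hφt δ' hδ'pos
  obtain ⟨K₂, hK₂⟩ := Metric.tendsto_atTop.mp hψt δ' hδ'pos
  set n₁ : ℕ := φ (max K₁ N) with hn₁def
  have hn₁N : N ≤ n₁ := le_trans (le_max_right K₁ N) (le_trans (StrictMono.le_apply hφ) (le_refl _))
  have hdu : dist (g^[n₁] x0) u ≤ δ' := (hK₁ (max K₁ N) (le_max_left _ _)).le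
  set k₂ : ℕ := max K₂ (n₁ + 1) with hk₂def
  set n₂ : ℕ := ψ k₂ with hn₂def
  have hn₂ : n₁ < n₂ := lt_of_lt_of_le (Nat.lt_of_lt_of_le (Nat.lt_succ_self n₁)
    (le_max_right K₂ (n₁+1))) (StrictMono.le_apply hψ)
  have hdv : dist (g^[n₂] x0) v ≤ δ' := (hK₂ k₂ (le_max_left _ _)).le
  set L : ℕ := n₂ - n₁ with hLdef
  have hL1 : 1 ≤ L := by omega
  have hsel : ∀ i : ℕ, ∃ w, w ∈ OmegaLimit1 g x0 ∧ dist (g^[n₁ + i] x0) w ≤ δ' := by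
    intro i
    obtain ⟨w, hw1, hw2⟩ := hN (n₁ + i) (by omega)
    exact ⟨w, hw1, hw2⟩
  choose W hWmem hWd using hsel
  refine ⟨L, hL1, fun i => if i = 0 then u else if L ≤ i then v else W i, ?_, ?_, by simp, ?_⟩
  · intro i _
    by_cases h0 : i = 0
    · simpa [h0] using ⟨φ, hφ, hφt⟩
    · by_cases hL : L ≤ i
      · simpa [h0, hL] using ⟨ψ, hψ, hψt⟩
      · simpa [h0, hL] using hWmem i
  · -- the chain condition
    have happrox : ∀ i ≤ L, dist (g^[n₁ + i] x0)
        (if i = 0 then u else if L ≤ i then v else W i) ≤ δ' := by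
      intro i hi
      by_cases h0 : i = 0
      · simpa [h0] using hdu
      · by_cases hL : L ≤ i
        · have : i = L := le_antisymm hi hL
          have : n₁ + i = n₂ := by omega
          simpa [h0, hL, this] using hdv
        · simpa [h0, hL] using hWd i
    intro i hi
    set ci := (if i = 0 then u else if L ≤ i then v else W i) with hci
    set ci1 := (if i + 1 = 0 then u else if L ≤ i + 1 then v else W (i+1)) with hci1
    have h1 : dist (g^[n₁ + i] x0) ci ≤ δ' := happrox i hi.le
    have h2 : dist (g^[n₁ + (i+1)] x0) ci1 ≤ δ' := happrox (i + 1) hi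
    have hstep : g^[n₁ + (i+1)] x0 = g (g^[n₁ + i] x0) := by
      rw [show n₁ + (i+1) = (n₁ + i) + 1 by ring, Function.iterate_succ_apply' g (n₁ + i) x0]
    have hcont : dist (g ci) (g (g^[n₁ + i] x0)) < δ/3 :=
      hδ'' (lt_of_le_of_lt (dist_comm (g^[n₁+i] x0) ci ▸ h1) hδ'2)
    have t1 : dist (g ci) ci1 ≤ dist (g ci) (g^[n₁ + (i+1)] x0)
        + dist (g^[n₁ + (i+1)] x0) ci1 := dist_triangle _ _ _
    have t2 : dist (g ci) (g^[n₁ + (i+1)] x0) < δ/3 := by rw [hstep]; exact hcont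
    have : δ' ≤ δ/3 := hδ'1
    linarith
  · simp [Nat.one_le_iff_ne_zero.mp hL1, le_refl]

lemma finite_shadowing [CompactSpace Y] {g : Y → Y} (h1 : LimitShadowing g) (Z : Set Y)
    (hZ : ∀ u ∈ Z, ∀ v ∈ Z, ∀ δ : ℝ, 0 < δ → ∃ L, 1 ≤ L ∧ ∃ c : ℕ → Y,
      (∀ i ≤ L, c i ∈ Z) ∧ IsChain' g δ c L ∧ c 0 = u ∧ c L = v)
    {ε : ℝ} (hε : 0 < ε) :
    ∃ δ > 0, ∀ n : ℕ, ∀ c : ℕ → Y, (∀ i ≤ n, c i ∈ Z) → IsChain' g δ c n →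
      ∃ p, ∀ i ≤ n, dist (g^[i] p) (c i) ≤ ε := by
  by_contra hcon
  push_neg at hcon
  -- For every k there is a bad 1/(k+1)-chain in Z.
  have hbad : ∀ k : ℕ, ∃ n : ℕ, ∃ c : ℕ → Y, (∀ i ≤ n, c i ∈ Z) ∧
      IsChain' g (1/(k+1+1) : ℝ) c n ∧ ∀ p, ∃ i ≤ n, ε < dist (g^[i] p) (c i) := by
    intro k
    obtain ⟨n, c, hc1, hc2, hc3⟩ := hcon (1/(k+1+1) : ℝ) (by positivity)
    exact ⟨n, c, hc1, hc2, hc3⟩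
  choose nn ξ hξZ hξch hξbad using hbad
  -- connectors
  have hconn : ∀ k : ℕ, ∃ L, 1 ≤ L ∧ ∃ d : ℕ → Y, (∀ i ≤ L, d i ∈ Z) ∧
      IsChain' g (1/(k+1+1) : ℝ) d L ∧ d 0 = ξ k (nn k) ∧ d L = ξ (k+1) 0 := by
    intro k
    exact hZ _ (hξZ k (nn k) le_rfl) _ (hξZ (k+1) 0 (Nat.zero_le _)) _ (by positivity)
  choose LL hLL dd hddZ hddch hdd0 hddL using hconn
  -- blocks
  set M : ℕ → ℕ := fun k => nn k + LL k with hM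
  set B : ℕ → ℕ → Y := fun k i => if i ≤ nn k then ξ k i else dd k (i - nn k) with hB
  have hB_lo : ∀ k, ∀ i ≤ nn k, B k i = ξ k i := fun k i hi => if_pos hi
  have hB_hi : ∀ k, ∀ i, nn k ≤ i → B k i = dd k (i - nn k) := by
    intro k i hi
    rcases lt_or_eq_of_le hi with h | h
    · exact if_neg (by omega)
    · simp only [hB, ← h, le_refl, if_pos, Nat.sub_self, hdd0 k]
  have hB_end : ∀ k, B k (M k) = B (k+1) 0 := by
    intro k
    have hMk : M k = nn k + LL k := rfl
    rw [hB_hi k (M k) (by omega), hB_lo (k+1) 0 (Nat.zero_le _), hMk,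
      Nat.add_sub_cancel_left, hddL k]
  have hB_chain : ∀ k, ∀ i < M k, dist (g (B k i)) (B k (i+1)) ≤ (1/(k+1+1) : ℝ) := by
    intro k i hi
    by_cases h : i + 1 ≤ nn k
    · rw [hB_lo k i (by omega), hB_lo k (i+1) h]
      exact hξch k i (by omega)
    · push_neg at h
      have hnk : nn k ≤ i := by omega
      rw [hB_hi k i hnk, hB_hi k (i+1) (by omega)]
      have : i + 1 - nn k = (i - nn k) + 1 := by omega
      rw [this]
      exact hddch k (i - nn k) (by have hMk : M k = nn k + LL k := rfl; omega)
  have hM1 : ∀ k, 1 ≤ M k := fun k => le_trans (hLL k) (Nat.le_add_left _ _)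
  -- global times
  set T : ℕ → ℕ := fun k => Nat.rec 0 (fun k' acc => acc + M k') k with hT
  have hTsucc : ∀ k, T (k+1) = T k + M k := fun k => rfl
  have hTmono : StrictMono T := strictMono_nat_of_lt_succ fun k => by
    rw [hTsucc]; have := hM1 k; omega
  have hTk : ∀ k, k ≤ T k := fun k => by
    induction k with
    | zero => simp
    | succ k ih => rw [hTsucc]; have := hM1 k; omega
  -- the spliced pseudo-orbit
  set KK : ℕ → ℕ := fun i => Nat.findGreatest (fun k => T k ≤ i) i with hKK
  have hKK_le : ∀ i, T (KK i) ≤ i := by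
    intro i
    exact Nat.findGreatest_spec (P := fun k => T k ≤ i) (Nat.zero_le i) (Nat.zero_le i)
  have hKK_ge : ∀ i k, T k ≤ i → k ≤ KK i := by
    intro i k h
    exact Nat.le_findGreatest (P := fun k => T k ≤ i) (le_trans (hTk k) h) h
  have hKK_lt : ∀ i, i < T (KK i + 1) := by
    intro i
    by_contra h
    push_neg at h
    have := hKK_ge i (KK i + 1) h
    omega
  set ξf : ℕ → Y := fun i => B (KK i) (i - T (KK i)) with hξf
  have hξf_lt : ∀ k i, T k ≤ i → i < T (k+1) → ξf i = B k (i - T k) := by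
    intro k i h1 h
    have e1 : k ≤ KK i := hKK_ge i k h1
    have e2 : KK i ≤ k := by
      by_contra hcc
      push_neg at hcc
      have : T (k+1) ≤ T (KK i) := hTmono.monotone hcc
      have := hKK_le i
      omega
    have he : KK i = k := le_antisymm e2 e1
    simp only [hξf, he]
  have hξf_eq : ∀ k i, T k ≤ i → i ≤ T (k+1) → ξf i = B k (i - T k) := by
    intro k i h1 h2
    rcases lt_or_eq_of_le h2 with h | h
    · exact hξf_lt k i h1 h
    · have hT2 : T (k+1) < T (k+1+1) := hTmono (Nat.lt_succ_self (k+1))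
      rw [hξf_lt (k+1) i (le_of_eq h.symm) (by rw [h]; exact hT2), h, Nat.sub_self, ← hB_end,
        hTsucc, show T k + M k - T k = M k from Nat.add_sub_cancel_left _ _]
  -- chain quality of the spliced pseudo-orbit
  have hξf_chain : ∀ k i, T k ≤ i → i < T (k+1) →
      dist (g (ξf i)) (ξf (i+1)) ≤ (1/(k+1+1) : ℝ) := by
    intro k i h1 h2
    rw [hξf_lt k i h1 h2, hξf_eq k (i+1) (by omega) (by omega),
      show i + 1 - T k = (i - T k) + 1 by omega]
    apply hB_chain k
    have : T (k+1) = T k + M k := hTsucc k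
    omega
  -- the jumps tend to 0
  have htend : Tendsto (fun i => dist (g (ξf i)) (ξf (i + 1))) atTop (nhds 0) := by
    rw [Metric.tendsto_atTop]
    intro e he
    obtain ⟨k0, hk0⟩ := exists_nat_one_div_lt (ε := e) he
    refine ⟨T k0, fun i hi => ?_⟩
    have hk0le : k0 ≤ KK i := hKK_ge i k0 (by omega)
    have hchain := hξf_chain (KK i) i (hKK_le i) (hKK_lt i)
    have hmono : (1/((KK i : ℝ)+1+1) : ℝ) ≤ (1/((k0 : ℝ)+1) : ℝ) := by
      apply one_div_le_one_div_of_le (by positivity)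
      have : (k0 : ℝ) ≤ (KK i : ℝ) := Nat.cast_le.mpr hk0le
      linarith
    have : dist (g (ξf i)) (ξf (i+1)) < e := lt_of_le_of_lt (le_trans hchain hmono) hk0
    have hnn : (0:ℝ) ≤ dist (g (ξf i)) (ξf (i+1)) := dist_nonneg
    rw [Real.dist_eq, sub_zero, abs_of_nonneg hnn]
    exact this
  -- limit shadowing
  obtain ⟨p, hp⟩ := h1 ξf htend
  rw [Metric.tendsto_atTop] at hp
  obtain ⟨N, hN⟩ := hp ε hε
  -- the block N is ε-shadowed by g^[T N] p : contradiction
  obtain ⟨i, hin, hibad⟩ := hξbad N (g^[T N] p)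
  have hTN : N ≤ T N := hTk N
  have hiTN : T N + i ≤ T (N+1) := by
    have h1 : T (N+1) = T N + M N := hTsucc N
    have h2 : M N = nn N + LL N := rfl
    omega
  have heq : ξf (T N + i) = ξ N i := by
    rw [hξf_eq N (T N + i) (by omega) hiTN, Nat.add_sub_cancel_left, hB_lo N i hin]
  have hiter : g^[i] (g^[T N] p) = g^[T N + i] p := by
    rw [Nat.add_comm, Function.iterate_add_apply]
  have := hN (T N + i) (by omega)
  rw [Real.dist_eq, sub_zero, abs_of_nonneg dist_nonneg, heq] at this
  rw [hiter] at hibad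
  linarith

lemma entropy_pos_of_horseshoe {f : Y → Y} {ε : ℝ} (hε : 0 < ε) {K : ℕ} (hK : 1 ≤ K)
    (H : ∀ m : ℕ, ∃ P : (Fin m → Bool) → Y, ∀ g g' : Fin m → Bool, g ≠ g' →
       ∃ t ≤ m * K, ε < dist (f^[t] (P g)) (f^[t] (P g'))) :
    0 < Dynamics.coverEntropy f Set.univ := by
  classical
  set U : Set (Y × Y) := {p | dist p.1 p.2 < ε/2} with hU
  have hUuni : U ∈ uniformity Y := Metric.dist_mem_uniformity (by positivity)
  choose P hP using H
  -- injectivity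
  have hPinj : ∀ m, Function.Injective (P m) := by
    intro m g g' h
    by_contra hne
    obtain ⟨t, -, ht⟩ := hP m g g' hne
    rw [h] at ht
    simp at ht
    linarith
  -- net cardinality estimate
  have hnet : ∀ m : ℕ, ((2^m : ℕ) : ℕ∞) ≤ Dynamics.netMaxcard f Set.univ U (m * K + 1) := by
    intro m
    set s : Finset Y := Finset.image (P m) Finset.univ with hs
    have hcard : s.card = 2^m := by
      rw [hs, Finset.card_image_of_injective _ (hPinj m), Finset.card_univ]
      simp [Fintype.card_fun]
    have hnetin : Dynamics.IsDynNetIn f Set.univ U (m * K + 1) ↑s := by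
      constructor
      · exact subset_univ _
      · intro x hx y hy hxy
        simp only [hs, Finset.coe_image, Finset.coe_univ, image_univ, mem_range] at hx hy
        obtain ⟨g, rfl⟩ := hx
        obtain ⟨g', rfl⟩ := hy
        have hgg : g ≠ g' := fun h => hxy (by rw [h])
        obtain ⟨t, htle, ht⟩ := hP m g g' hgg
        simp only [Function.onFun]
        rw [Set.disjoint_left]
        intro z hz1 hz2
        have hm1 : (P m g, z) ∈ Dynamics.dynEntourage f U (m * K + 1) := hz1
        have hm2 : (P m g', z) ∈ Dynamics.dynEntourage f U (m * K + 1) := hz2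
        have h1 := Dynamics.mem_dynEntourage.mp hm1 t (by omega)
        have h2 := Dynamics.mem_dynEntourage.mp hm2 t (by omega)
        simp only [hU, mem_setOf_eq] at h1 h2
        have := dist_triangle (f^[t] (P m g)) (f^[t] z) (f^[t] (P m g'))
        rw [dist_comm (f^[t] z) (f^[t] (P m g'))] at this
        linarith
    have hle := hnetin.card_le_netMaxcard
    rwa [hcard] at hle
  -- entropy estimate
  have hlog2 : (0:ℝ) < Real.log 2 := Real.log_pos one_lt_two
  set c : EReal := ((Real.log 2 / (2*K) : ℝ) : EReal) with hc
  have hcpos : (0 : EReal) < c := by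
    rw [hc]
    exact_mod_cast EReal.coe_pos.mpr (by positivity)
  have hKpos : 0 < K := hK
  have hbound : ∀ n : ℕ, 2*K + 1 ≤ n →
      c ≤ ENNReal.log (Dynamics.netMaxcard f Set.univ U n) / (n : EReal) := by
    intro n hn
    set m : ℕ := (n-1)/K with hm
    have hm2 : 2 ≤ m := (Nat.le_div_iff_mul_le hKpos).mpr (by omega)
    have hmn : m*K + 1 ≤ n := by
      have h := Nat.div_mul_le_self (n-1) K
      rw [← hm] at h
      omega
    have hn2 : n ≤ 2*(m*K) := by
      have h1 : (n - 1) % K < K := Nat.mod_lt _ hKpos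
      have h2 : (n-1) % K + m * K = n - 1 := Nat.mod_add_div' (n-1) K
      have h3 : K ≤ m * K := Nat.le_mul_of_pos_left K (by omega)
      omega
    -- netMaxcard n ≥ 2^m
    have hcard1 : ((2^m : ℕ) : ℕ∞) ≤ Dynamics.netMaxcard f Set.univ U n :=
      le_trans (hnet m) (Dynamics.netMaxcard_monotone_time f Set.univ U hmn)
    -- log bound
    have hlogle : (((m : ℝ) * Real.log 2 : ℝ) : EReal)
        ≤ ENNReal.log (Dynamics.netMaxcard f Set.univ U n) := by
      have h2m : ((2:ℝ≥0∞))^m ≤ ((Dynamics.netMaxcard f Set.univ U n : ℕ∞) : ℝ≥0∞) := by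
        rw [show ((2:ℝ≥0∞))^m = (((2^m : ℕ) : ℕ∞) : ℝ≥0∞) by norm_cast]
        exact ENat.toENNReal_mono hcard1
      have hlm := ENNReal.log_monotone h2m
      rw [ENNReal.log_pow] at hlm
      have hl2 : ENNReal.log 2 = ((Real.log 2 : ℝ) : EReal) := by
        rw [ENNReal.log_pos_real' (by simp)]
        norm_num
      rw [hl2] at hlm
      refine le_trans (le_of_eq ?_) hlm
      rw [EReal.coe_mul, EReal.coe_coe_eq_natCast]
    have hnpos : (0:ℝ) < (n:ℝ) := by exact_mod_cast (by omega : 0 < n)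
    calc c ≤ (((m : ℝ) * Real.log 2 / (n:ℝ) : ℝ) : EReal) := by
          rw [hc]
          apply EReal.coe_le_coe_iff.mpr
          have hKR : (0:ℝ) < (K:ℝ) := by exact_mod_cast hKpos
          rw [div_le_div_iff₀ (by linarith) hnpos]
          have hcast : (n:ℝ) ≤ 2*((m:ℝ)*(K:ℝ)) := by exact_mod_cast hn2
          nlinarith
      _ ≤ ENNReal.log (Dynamics.netMaxcard f Set.univ U n) / (n : EReal) := by
          rw [EReal.coe_div, EReal.coe_coe_eq_natCast]
          exact EReal.div_le_div_right_of_nonneg (by exact_mod_cast Nat.cast_nonneg n) hlogle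
  -- conclude via liminf
  have hliminf : c ≤ Dynamics.netEntropyInfEntourage f Set.univ U := by
    refine le_liminf_of_le (by isBoundedDefault) ?_
    filter_upwards [eventually_ge_atTop (2*K+1)] with n hn using hbound n hn
  calc (0 : EReal) < c := hcpos
    _ ≤ Dynamics.netEntropyInfEntourage f Set.univ U := hliminf
    _ ≤ Dynamics.netEntropyEntourage f Set.univ U :=
        Dynamics.netEntropyInfEntourage_le_netEntropyEntourage f Set.univ U
    _ ≤ Dynamics.coverEntropy f Set.univ := Dynamics.netEntropyEntourage_le_coverEntropy (T := f) Set.univ hUuni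

end AuxLemmas

/-- with limit shadowing, a Li-Yorke pair (in particular DC1)
forces positive topological entropy. -/
theorem limitShadowing_liYorke_posEntropy {X : Type*} [MetricSpace X] [CompactSpace X]
    (f : X → X) (hf : Continuous f) (h1 : LimitShadowing f)
    (h2 : ∃ x y : X, LiYorkePair f x y) :
    0 < Dynamics.coverEntropy f Set.univ := by
  classical
  obtain ⟨x, y, hLY1, hLY2⟩ := h2
  set g : X × X → X × X := fun p => (f p.1, f p.2) with hg_def
  have hg : Continuous g := (hf.comp continuous_fst).prodMk (hf.comp continuous_snd)
  have hgiter : ∀ n : ℕ, ∀ p : X × X, g^[n] p = (f^[n] p.1, f^[n] p.2) := by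
    intro n
    induction n with
    | zero => intro p; simp
    | succ n ih =>
      intro p
      rw [Function.iterate_succ_apply' , Function.iterate_succ_apply',
        Function.iterate_succ_apply', ih p]
  set W : Set (X × X) := OmegaLimit1 g (x, y) with hW_def
  set u : ℕ → ℝ := fun n => dist (f^[n] x) (f^[n] y) with hu_def
  have hbdd_ge : IsBoundedUnder (· ≥ ·) atTop u :=
    isBoundedUnder_of ⟨0, fun n => dist_nonneg⟩
  have hbdd_le : IsBoundedUnder (· ≤ ·) atTop u := by
    obtain ⟨C, hC⟩ := Metric.isBounded_iff.mp (isCompact_univ (X := X)).isBounded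
    exact isBoundedUnder_of ⟨C, fun n => hC (mem_univ _) (mem_univ _)⟩
  -- proximal accumulation point (a₁, a₂) with a₁ = a₂
  have hfreq : ∀ k : ℕ, ∃ᶠ n in atTop, u n < 1/(k+1) := by
    intro k
    apply frequently_lt_of_liminf_lt (hbdd_le.isCoboundedUnder_ge)
    rw [hLY1]
    positivity
  obtain ⟨φ, hφ, hφP⟩ := extraction_forall_of_frequently hfreq
  obtain ⟨a, -, ρ, hρ, haT⟩ := isCompact_univ.tendsto_subseq
    (x := fun n => (f^[φ n] x, f^[φ n] y)) (fun n => mem_univ _)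
  obtain ⟨a1, a2⟩ := a
  have haW : (a1, a2) ∈ W := by
    refine ⟨φ ∘ ρ, hφ.comp hρ, ?_⟩
    simpa [hgiter, Function.comp_def] using haT
  have ha12 : a1 = a2 := by
    have hdt : Tendsto (fun n => u (φ (ρ n))) atTop (nhds (dist a1 a2)) := by
      have h1 : Tendsto (fun n => f^[φ (ρ n)] x) atTop (nhds a1) :=
        ((continuous_fst.tendsto (a1, a2)).comp haT)
      have h2 : Tendsto (fun n => f^[φ (ρ n)] y) atTop (nhds a2) :=
        ((continuous_snd.tendsto (a1, a2)).comp haT)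
      exact h1.dist h2
    have hle : dist a1 a2 ≤ 0 := by
      refine le_of_tendsto_of_tendsto hdt tendsto_one_div_add_atTop_nhds_zero_nat
        (Eventually.of_forall fun n => ?_)
      have h1 := hφP (ρ n)
      have h2 : (1:ℝ)/(ρ n + 1) ≤ 1/(n+1) := by
        apply one_div_le_one_div_of_le (by positivity)
        have : (n:ℝ) ≤ (ρ n : ℝ) := Nat.cast_le.mpr (StrictMono.le_apply hρ)
        linarith
      exact le_trans h1.le h2
    exact dist_le_zero.mp hle
  -- separated accumulation point (b, c)
  have hfreq2 : ∃ᶠ n in atTop, limsup u atTop / 2 < u n := by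
    apply frequently_lt_of_lt_limsup (hbdd_ge.isCoboundedUnder_le)
    linarith [hLY2]
  obtain ⟨φ₂, hφ₂, hφ₂P⟩ := extraction_of_frequently_atTop hfreq2
  obtain ⟨bc, -, ρ₂, hρ₂, hbcT⟩ := isCompact_univ.tendsto_subseq
    (x := fun n => (f^[φ₂ n] x, f^[φ₂ n] y)) (fun n => mem_univ _)
  obtain ⟨b, c⟩ := bc
  have hbcW : (b, c) ∈ W := by
    refine ⟨φ₂ ∘ ρ₂, hφ₂.comp hρ₂, ?_⟩
    simpa [hgiter, Function.comp_def] using hbcT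
  have hD : 0 < dist b c := by
    have hdt : Tendsto (fun n => u (φ₂ (ρ₂ n))) atTop (nhds (dist b c)) := by
      have h1 : Tendsto (fun n => f^[φ₂ (ρ₂ n)] x) atTop (nhds b) :=
        ((continuous_fst.tendsto (b, c)).comp hbcT)
      have h2 : Tendsto (fun n => f^[φ₂ (ρ₂ n)] y) atTop (nhds c) :=
        ((continuous_snd.tendsto (b, c)).comp hbcT)
      exact h1.dist h2
    have hge : limsup u atTop / 2 ≤ dist b c :=
      ge_of_tendsto hdt (Eventually.of_forall fun n => (hφ₂P (ρ₂ n)).le)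
    linarith [hLY2]
  -- the projected omega-limit set
  set Z : Set X := {z | ∃ w ∈ W, w.1 = z ∨ w.2 = z} with hZ_def
  -- projections of g-chains are f-chains
  have hproj1 : ∀ (C : ℕ → X × X) (L : ℕ) (δ : ℝ), IsChain' g δ C L →
      IsChain' f δ (fun i => (C i).1) L := by
    intro C L δ hC i hi
    have := hC i hi
    rw [Prod.dist_eq] at this
    exact le_trans (le_max_left _ _) this
  have hproj2 : ∀ (C : ℕ → X × X) (L : ℕ) (δ : ℝ), IsChain' g δ C L →
      IsChain' f δ (fun i => (C i).2) L := by
    intro C L δ hC i hi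
    have := hC i hi
    rw [Prod.dist_eq] at this
    exact le_trans (le_max_right _ _) this
  -- Z is internally chain transitive
  have hZchain : ∀ zu ∈ Z, ∀ zv ∈ Z, ∀ δ : ℝ, 0 < δ → ∃ L, 1 ≤ L ∧ ∃ c : ℕ → X,
      (∀ i ≤ L, c i ∈ Z) ∧ IsChain' f δ c L ∧ c 0 = zu ∧ c L = zv := by
    intro zu hzu zv hzv δ hδ
    obtain ⟨wu, hwuW, hwu⟩ := hzu
    obtain ⟨wv, hwvW, hwv⟩ := hzv
    obtain ⟨L1, hL1, C1, hC1W, hC1ch, hC10, hC1L⟩ := omega_chain hg (x, y) hwuW haW hδ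
    obtain ⟨L2, hL2, C2, hC2W, hC2ch, hC20, hC2L⟩ := omega_chain hg (x, y) haW hwvW hδ
    -- choose the coordinate projections
    have hcu : ∃ cu : ℕ → X, IsChain' f δ cu L1 ∧ (∀ i ≤ L1, cu i ∈ Z) ∧
        cu 0 = zu ∧ cu L1 = a1 := by
      rcases hwu with h | h
      · exact ⟨fun i => (C1 i).1, hproj1 C1 L1 δ hC1ch,
          fun i hi => ⟨C1 i, hC1W i hi, Or.inl rfl⟩, by simp only [hC10, h], by simp only [hC1L]⟩
      · refine ⟨fun i => (C1 i).2, hproj2 C1 L1 δ hC1ch,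
          fun i hi => ⟨C1 i, hC1W i hi, Or.inr rfl⟩, by simp only [hC10, h], by simp only [hC1L, ← ha12]⟩
    have hcv : ∃ cv : ℕ → X, IsChain' f δ cv L2 ∧ (∀ i ≤ L2, cv i ∈ Z) ∧
        cv 0 = a1 ∧ cv L2 = zv := by
      rcases hwv with h | h
      · exact ⟨fun i => (C2 i).1, hproj1 C2 L2 δ hC2ch,
          fun i hi => ⟨C2 i, hC2W i hi, Or.inl rfl⟩, by simp only [hC20], by simp only [hC2L, h]⟩
      · refine ⟨fun i => (C2 i).2, hproj2 C2 L2 δ hC2ch,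
          fun i hi => ⟨C2 i, hC2W i hi, Or.inr rfl⟩, by simp only [hC20, ← ha12], by simp only [hC2L, h]⟩
    obtain ⟨cu, hcu1, hcu2, hcu3, hcu4⟩ := hcu
    obtain ⟨cv, hcv1, hcv2, hcv3, hcv4⟩ := hcv
    obtain ⟨e, he1, he2, he3, he4⟩ := chain_append f δ Z cu cv L1 L2 hcu1 hcv1 hcu2 hcv2
      (by rw [hcu4, hcv3])
    refine ⟨L1 + L2, by omega, e, he2, he1, by rw [he3 0 (Nat.zero_le _), hcu3], ?_⟩
    rw [he4 (L1 + L2) (Nat.le_add_right _ _), Nat.add_sub_cancel_left, hcv4]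
  -- uniform finite shadowing at accuracy D/6
  set D : ℝ := dist b c with hD_def
  obtain ⟨δ, hδpos, hshadow⟩ := finite_shadowing h1 Z hZchain (ε := D/6) (by positivity)
  -- the two loops at a1 through b resp. c
  obtain ⟨s₁, hs₁, C1, hC1W, hC1ch, hC10, hC1L⟩ := omega_chain hg (x, y) haW hbcW hδpos
  obtain ⟨s₂, hs₂, C2, hC2W, hC2ch, hC20, hC2L⟩ := omega_chain hg (x, y) hbcW haW hδpos
  set K : ℕ := s₁ + s₂ with hK_def
  have hKpos : 0 < K := by omega
  have hs₁K : s₁ < K := by omega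
  obtain ⟨A, hA1, hA2, hA3, hA4⟩ := chain_append f δ Z (fun i => (C1 i).1) (fun i => (C2 i).1)
    s₁ s₂ (hproj1 C1 s₁ δ hC1ch) (hproj1 C2 s₂ δ hC2ch)
    (fun i hi => ⟨C1 i, hC1W i hi, Or.inl rfl⟩) (fun i hi => ⟨C2 i, hC2W i hi, Or.inl rfl⟩)
    (by simp only [hC1L, hC20])
  obtain ⟨B, hB1, hB2, hB3, hB4⟩ := chain_append f δ Z (fun i => (C1 i).2) (fun i => (C2 i).2)
    s₁ s₂ (hproj2 C1 s₁ δ hC1ch) (hproj2 C2 s₂ δ hC2ch)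
    (fun i hi => ⟨C1 i, hC1W i hi, Or.inr rfl⟩) (fun i hi => ⟨C2 i, hC2W i hi, Or.inr rfl⟩)
    (by simp only [hC1L, hC20])
  have hA0 : A 0 = a1 := by rw [hA3 0 (Nat.zero_le _)]; simp only [hC10]
  have hAK : A K = a1 := by
    rw [hA4 K (by omega), hK_def, Nat.add_sub_cancel_left]; simp only [hC2L]
  have hAs₁ : A s₁ = b := by rw [hA3 s₁ le_rfl]; simp only [hC1L]
  have hB0 : B 0 = a1 := by rw [hB3 0 (Nat.zero_le _)]; simp only [hC10, ← ha12]
  have hBK : B K = a1 := by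
    rw [hB4 K (by omega), hK_def, Nat.add_sub_cancel_left]; simp only [hC2L, ← ha12]
  have hBs₁ : B s₁ = c := by rw [hB3 s₁ le_rfl]; simp only [hC1L]
  -- dictionary of loops
  set CAB : Bool → ℕ → X := fun t => if t then A else B with hCAB_def
  have hCAB0 : ∀ t, CAB t 0 = a1 := by intro t; cases t <;> simp [hCAB_def, hA0, hB0]
  have hCABK : ∀ t, CAB t K = a1 := by intro t; cases t <;> simp [hCAB_def, hAK, hBK]
  have hCABch : ∀ t, IsChain' f δ (CAB t) K := by
    intro t; cases t <;> simpa [hCAB_def, hK_def] using (by assumption)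
  have hCABZ : ∀ t, ∀ i ≤ K, CAB t i ∈ Z := by
    intro t; cases t <;> simpa [hCAB_def, hK_def] using (by assumption)
  have hCABs₁ : ∀ t, CAB t s₁ = if t then b else c := by
    intro t; cases t <;> simp [hCAB_def, hAs₁, hBs₁]
  -- division arithmetic
  have hdiv : ∀ j r : ℕ, r < K → (K*j + r)/K = j ∧ (K*j + r)%K = r := by
    intro j r hr
    constructor
    · rw [Nat.add_comm, Nat.add_mul_div_left _ _ hKpos, Nat.div_eq_of_lt hr, Nat.zero_add]
    · rw [Nat.add_comm, Nat.add_mul_mod_self_left, Nat.mod_eq_of_lt hr]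
  -- apply the horseshoe criterion
  apply entropy_pos_of_horseshoe (ε := D/2) (by positivity) (K := K) (by omega)
  intro m
  -- word pseudo-orbits
  set Ξ : (Fin m → Bool) → ℕ → X := fun w i =>
    CAB (if h : i / K < m then w ⟨i / K, h⟩ else true) (i % K) with hΞ_def
  have hΞZ : ∀ w, ∀ i ≤ m*K, Ξ w i ∈ Z := by
    intro w i _
    exact hCABZ _ _ (le_of_lt (Nat.mod_lt _ hKpos))
  have hΞch : ∀ w, IsChain' f δ (Ξ w) (m*K) := by
    intro w i _
    have hr : i % K < K := Nat.mod_lt _ hKpos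
    have hij : K * (i/K) + i % K = i := Nat.div_add_mod i K
    by_cases hc : i % K + 1 < K
    · have h2 : (i+1)/K = i/K ∧ (i+1)%K = i%K + 1 := by
        have : K * (i/K) + (i%K+1) = i+1 := by omega
        rw [← this]
        exact hdiv _ _ hc
      have e1 : Ξ w (i+1) = CAB (if h : i / K < m then w ⟨i / K, h⟩ else true) (i%K+1) := by
        simp only [hΞ_def, h2.1, h2.2]
      rw [e1]
      exact hCABch _ _ hr
    · have hrK : i % K + 1 = K := by omega
      have h2 : (i+1)/K = i/K + 1 ∧ (i+1)%K = 0 := by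
        have : K * (i/K + 1) + 0 = i+1 := by
          have : K * (i/K + 1) = K * (i/K) + K := by ring
          omega
        rw [← this]
        exact hdiv _ _ hKpos
      have e1 : Ξ w (i+1) = CAB (if h : i/K + 1 < m then w ⟨i/K + 1, h⟩ else true) 0 := by
        simp only [hΞ_def, h2.1, h2.2]
      rw [e1, hCAB0]
      have := hCABch (if h : i / K < m then w ⟨i / K, h⟩ else true) (i % K) hr
      rw [hrK, hCABK] at this
      simpa [hΞ_def] using this
  -- shadowing points
  have hPex : ∀ w : Fin m → Bool, ∃ p, ∀ i ≤ m*K, dist (f^[i] p) (Ξ w i) ≤ D/6 :=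
    fun w => hshadow (m*K) (Ξ w) (hΞZ w) (hΞch w)
  choose P hP using hPex
  refine ⟨P, fun w w' hne => ?_⟩
  obtain ⟨j, hj⟩ := Function.ne_iff.mp hne
  set t : ℕ := K * (j:ℕ) + s₁ with ht_def
  have htm : t ≤ m*K := by
    have h1 : K*((j:ℕ)+1) = K*(j:ℕ) + K := by ring
    have h2 : K*((j:ℕ)+1) ≤ K*m := Nat.mul_le_mul_left _ (by omega)
    have h3 : m*K = K*m := Nat.mul_comm _ _
    omega
  have heval : ∀ w'' : Fin m → Bool, Ξ w'' t = if w'' j then b else c := by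
    intro w''
    have hd := hdiv (j:ℕ) s₁ hs₁K
    have : Ξ w'' t = CAB (if h : (j:ℕ) < m then w'' ⟨(j:ℕ), h⟩ else true) s₁ := by
      simp only [hΞ_def, ht_def, hd.1, hd.2]
    rw [this, dif_pos j.isLt, hCABs₁]
  have hdist : dist (Ξ w t) (Ξ w' t) = D := by
    rw [heval w, heval w']
    rcases Bool.eq_false_or_eq_true (w j) with h | h <;>
      rcases Bool.eq_false_or_eq_true (w' j) with h' | h' <;>
        simp [h, h'] at hj ⊢ <;> first | rfl | (rw [dist_comm])
  refine ⟨t, htm, ?_⟩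
  have hsh1 := hP w t htm
  have hsh2 := hP w' t htm
  have htri : dist (Ξ w t) (Ξ w' t) ≤ dist (Ξ w t) (f^[t] (P w))
      + dist (f^[t] (P w)) (f^[t] (P w')) + dist (f^[t] (P w')) (Ξ w' t) :=
    dist_triangle4 _ _ _ _
  rw [hdist] at htri
  rw [dist_comm] at hsh1
  rw [dist_comm (f^[t] (P w')) (Ξ w' t)] at hsh2
  linarith [hsh2, dist_comm (f^[t] (P w')) (Ξ w' t) ▸ hsh2]
end

section
/- Let X be a compact metric space and f : X → X continuous. Suppose f|_{CR(f)} has the shadowing property and (x, y) ∈ CR(f)² with x ≠ y and x ~ y. Then for every ε with 0 < ε < d(x,y)/2 there exist a positive integer a, a compact f^a-invariant set Y ⊆ CR(f), and a factor map π : (Y, f^a) → ({0,1}^ℕ, σ) (i.e., π continuous surjective with π ∘ f^a = σ ∘ π), where σ is the shift map; moreover π can be chosen so that π^{-1}(0^∞) ⊆ B_ε(x) and π^{-1}(1^∞) ⊆ B_ε(y). -/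
open Metric Filter Set
open scoped Classical

section Aux
variable {X : Type*} [MetricSpace X]

lemma isClosed_CR [CompactSpace X] {f : X → X} (hf : Continuous f) : IsClosed (CR f) := by
  rw [← closure_subset_iff_isClosed]
  intro x hx δ hδ
  obtain ⟨η, hη0, hηf⟩ := Metric.continuous_iff.mp hf x (δ/3) (by linarith)
  obtain ⟨z, hzCR, hxz⟩ := Metric.mem_closure_iff.mp hx (min η (δ/3)) (by positivity)
  obtain ⟨k, hk, c, hc, hc0, hck⟩ := hzCR (δ/3) (by linarith)
  have hxz1 : dist x z < η := lt_of_lt_of_le hxz (min_le_left _ _)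
  have hxz2 : dist x z < δ/3 := lt_of_lt_of_le hxz (min_le_right _ _)
  have hfz : dist (f z) (f x) < δ/3 := hηf z (by rwa [dist_comm])
  refine ⟨k, hk, (fun i => if i = 0 ∨ i = k then x else c i), ?_, by simp, by simp⟩
  intro i hi
  show dist (f (if i = 0 ∨ i = k then x else c i)) (if i + 1 = 0 ∨ i + 1 = k then x else c (i + 1)) ≤ δ
  have hik : i ≠ k := Nat.ne_of_lt hi
  by_cases h0 : i = 0 <;> by_cases h1 : i + 1 = k
  · -- k = 1
    subst h0
    have h2 := hc 0 hi
    rw [hc0] at h2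
    have hc1 : c (0 + 1) = z := by rw [h1]; exact hck
    rw [hc1] at h2
    rw [if_pos (Or.inl rfl), if_pos (Or.inr h1)]
    calc dist (f x) x ≤ dist (f x) (f z) + dist (f z) z + dist z x := dist_triangle4 _ _ _ _
    _ ≤ δ := by rw [dist_comm (f x) (f z), dist_comm z x]; linarith
  · rw [if_pos (Or.inl h0), if_neg (by omega : ¬(i + 1 = 0 ∨ i + 1 = k))]
    subst h0
    have h2 := hc 0 hi
    rw [hc0] at h2
    calc dist (f x) (c (0+1)) ≤ dist (f x) (f z) + dist (f z) (c (0+1)) := dist_triangle _ _ _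
    _ ≤ δ := by rw [dist_comm (f x) (f z)]; linarith
  · rw [if_neg (by omega : ¬(i = 0 ∨ i = k)), if_pos (Or.inr h1)]
    have h2 := hc i hi
    rw [h1, hck] at h2
    calc dist (f (c i)) x ≤ dist (f (c i)) z + dist z x := dist_triangle _ _ _
    _ ≤ δ := by rw [dist_comm z x]; linarith
  · rw [if_neg (by omega : ¬(i = 0 ∨ i = k)), if_neg (by omega : ¬(i + 1 = 0 ∨ i + 1 = k))]
    have h2 := hc i hi
    linarith

lemma mapsTo_CR [CompactSpace X] {f : X → X} (hf : Continuous f) :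
    Set.MapsTo f (CR f) (CR f) := by
  intro x hx δ hδ
  obtain ⟨η, hη0, hηf⟩ := Metric.uniformContinuous_iff.mp
    (CompactSpace.uniformContinuous_of_continuous hf) (δ/2) (by linarith)
  obtain ⟨k, hk, c, hc, hc0, hck⟩ := hx (min (η/2) (δ/2)) (by positivity)
  have hδ'η : min (η/2) (δ/2) < η := lt_of_le_of_lt (min_le_left _ _) (by linarith)
  have hδ'δ : min (η/2) (δ/2) ≤ δ/2 := min_le_right _ _
  refine ⟨k, hk, (fun i => if i = 0 ∨ k ≤ i then f x else c (i + 1)), ?_, by simp, by simp⟩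
  intro i hi
  show dist (f (if i = 0 ∨ k ≤ i then f x else c (i + 1)))
      (if i + 1 = 0 ∨ k ≤ i + 1 then f x else c (i + 1 + 1)) ≤ δ
  have hik : ¬ k ≤ i := Nat.not_le.2 hi
  by_cases h0 : i = 0 <;> by_cases h1 : i + 1 = k
  · subst h0
    have h2 := hc 0 hi
    rw [hc0] at h2
    have hc1 : c (0 + 1) = x := by rw [h1]; exact hck
    rw [hc1] at h2
    rw [if_pos (Or.inl rfl), if_pos (Or.inr (by omega : k ≤ 0 + 1))]
    have h3 : dist (f (f x)) (f x) < δ/2 := hηf (lt_of_le_of_lt h2 hδ'η)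
    linarith
  · rw [if_pos (Or.inl h0), if_neg (by omega : ¬(i + 1 = 0 ∨ k ≤ i + 1))]
    subst h0
    have h2 := hc 0 hi
    rw [hc0] at h2
    have h3 : dist (f (f x)) (f (c (0+1))) < δ/2 := hηf (lt_of_le_of_lt h2 hδ'η)
    have h4 := hc (0+1) (by omega)
    calc dist (f (f x)) (c (0+1+1)) ≤ dist (f (f x)) (f (c (0+1))) + dist (f (c (0+1))) (c (0+1+1)) :=
      dist_triangle _ _ _
    _ ≤ δ := by linarith
  · rw [if_neg (by omega : ¬(i = 0 ∨ k ≤ i)), if_pos (Or.inr (by omega : k ≤ i + 1))]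
    have hci : c (i + 1) = x := by rw [h1]; exact hck
    rw [hci]
    simp [hδ.le]
  · rw [if_neg (by omega : ¬(i = 0 ∨ k ≤ i)), if_neg (by omega : ¬(i + 1 = 0 ∨ k ≤ i + 1))]
    have h2 := hc (i+1) (by omega)
    linarith

def splice (c d : ℕ → X) (k : ℕ) : ℕ → X := fun i => if i < k then c i else d (i - k)

lemma isChain'_splice {f : X → X} {δ : ℝ} {c d : ℕ → X} {k l : ℕ}
    (hc : IsChain' f δ c k) (hd : IsChain' f δ d l) (hcd : c k = d 0) :
    IsChain' f δ (splice c d k) (k + l) := by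
  intro i hi
  unfold splice
  rcases lt_or_ge i k with h | h
  · rw [if_pos h]
    rcases lt_or_ge (i+1) k with h2 | h2
    · rw [if_pos h2]; exact hc i h
    · have h3 : i + 1 = k := by omega
      rw [if_neg (by omega), h3, Nat.sub_self, ← hcd, ← h3]
      exact hc i h
  · rw [if_neg (by omega), if_neg (by omega)]
    have : i + 1 - k = (i - k) + 1 := by omega
    rw [this]
    exact hd (i - k) (by omega)

end Aux


/-- construction of a factor map onto the full shift on two symbols. -/
theorem factor_onto_full_shift {X : Type*} [MetricSpace X] [CompactSpace X]
    (f : X → X) (hf : Continuous f) (h : ShadowingOnCR f) (x y : X)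
    (hx : x ∈ CR f) (hy : y ∈ CR f) (hne : x ≠ y) (hrel : ChainRel f x y) :
    ∀ ε : ℝ, 0 < ε → ε < dist x y / 2 →
      ∃ (a : ℕ) (Y : Set X) (π : X → (ℕ → Bool)), 0 < a ∧
        IsCompact Y ∧ Y ⊆ CR f ∧ Set.MapsTo (f^[a]) Y Y ∧
        ContinuousOn π Y ∧
        (∀ s : ℕ → Bool, ∃ p ∈ Y, π p = s) ∧
        (∀ p ∈ Y, π (f^[a] p) = fun i => π p (i + 1)) ∧
        (∀ p ∈ Y, π p = (fun _ => false) → p ∈ Metric.ball x ε) ∧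
        (∀ p ∈ Y, π p = (fun _ => true) → p ∈ Metric.ball y ε) := by
  intro ε hε hεd
  have hd0 : (0:ℝ) < dist x y := dist_pos.2 hne
  set ε' : ℝ := ε / 2 with hε'def
  have hε'0 : 0 < ε' := by positivity
  have hε'ε : ε' < ε := by rw [hε'def]; linarith
  have h2ε' : 2 * ε' < dist x y := by rw [hε'def]; linarith
  obtain ⟨δ, hδ0, hshad⟩ := h ε' hε'0
  obtain ⟨m, hm, N, hN, hrel'⟩ := hrel δ hδ0
  obtain ⟨⟨cxy, hcxy, hcxyCR, hcxy0, hcxyE⟩, ⟨cyx, hcyx, hcyxCR, hcyx0, hcyxE⟩⟩ := hrel' N le_rfl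
  obtain ⟨⟨cxy2, hcxy2, hcxy2CR, hcxy20, hcxy2E⟩, ⟨cyx2, hcyx2, hcyx2CR, hcyx20, hcyx2E⟩⟩ :=
    hrel' (2*N) (by omega)
  set L := m * N with hL
  have hL0 : 0 < L := Nat.mul_pos hm hN
  have h2L : m * (2 * N) = L + L := by rw [hL]; ring
  rw [h2L] at hcxy2 hcxy2CR hcxy2E hcyx2 hcyx2CR hcyx2E
  set a := L + L with ha
  have ha0 : 0 < a := by omega
  obtain ⟨z, hzf, hzt⟩ : ∃ z : Bool → X, z false = x ∧ z true = y :=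
    ⟨fun b => bif b then y else x, rfl, rfl⟩
  obtain ⟨C, hCchain, hC0, hCa, hCCR⟩ : ∃ C : Bool → Bool → ℕ → X,
      (∀ b b', IsChain' f δ (C b b') a) ∧ (∀ b b', C b b' 0 = z b) ∧
      (∀ b b', C b b' a = z b') ∧ (∀ b b' i, i ≤ a → C b b' i ∈ CR f) := by
    have Sxx : IsChain' f δ (splice cxy cyx L) a := by
      rw [ha]; exact isChain'_splice hcxy hcyx (by rw [hcxyE, hcyx0])
    have Syy : IsChain' f δ (splice cyx cxy L) a := by
      rw [ha]; exact isChain'_splice hcyx hcxy (by rw [hcyxE, hcxy0])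
    have Sxx0 : splice cxy cyx L 0 = x := by unfold splice; rw [if_pos hL0]; exact hcxy0
    have Syy0 : splice cyx cxy L 0 = y := by unfold splice; rw [if_pos hL0]; exact hcyx0
    have SxxE : splice cxy cyx L a = x := by
      unfold splice; rw [ha, if_neg (by omega), show L + L - L = L by omega]; exact hcyxE
    have SyyE : splice cyx cxy L a = y := by
      unfold splice; rw [ha, if_neg (by omega), show L + L - L = L by omega]; exact hcxyE
    have SxxCR : ∀ i ≤ a, splice cxy cyx L i ∈ CR f := by
      intro i hi; rw [ha] at hi; unfold splice; split_ifs with hh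
      · exact hcxyCR i (by omega)
      · exact hcyxCR _ (by omega)
    have SyyCR : ∀ i ≤ a, splice cyx cxy L i ∈ CR f := by
      intro i hi; rw [ha] at hi; unfold splice; split_ifs with hh
      · exact hcyxCR i (by omega)
      · exact hcxyCR _ (by omega)
    refine ⟨fun b b' => match b, b' with
      | false, false => splice cxy cyx L
      | false, true  => cxy2
      | true, false  => cyx2
      | true, true   => splice cyx cxy L, ?_, ?_, ?_, ?_⟩
    · rintro (_|_) (_|_)
      · exact Sxx
      · exact hcxy2
      · exact hcyx2
      · exact Syy
    · rintro (_|_) (_|_)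
      · rw [hzf]; exact Sxx0
      · rw [hzf]; exact hcxy20
      · rw [hzt]; exact hcyx20
      · rw [hzt]; exact Syy0
    · rintro (_|_) (_|_)
      · rw [hzf]; exact SxxE
      · rw [hzt]; exact hcxy2E
      · rw [hzf]; exact hcyx2E
      · rw [hzt]; exact SyyE
    · rintro (_|_) (_|_) i hi
      · exact SxxCR i hi
      · exact hcxy2CR i hi
      · exact hcyx2CR i hi
      · exact SyyCR i hi
  refine ⟨a, CR f ∩ ⋂ i : ℕ, f^[a*i] ⁻¹' (closedBall x ε' ∪ closedBall y ε'),
    fun p i => decide (dist (f^[a*i] p) y ≤ ε'), ha0, ?_, inter_subset_left, ?_, ?_, ?_, ?_, ?_, ?_⟩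
  · exact ((isClosed_CR hf).inter (isClosed_iInter fun i =>
      (isClosed_closedBall.union isClosed_closedBall).preimage (hf.iterate _))).isCompact
  · -- MapsTo
    rintro p ⟨hp1, hp2⟩
    refine ⟨(mapsTo_CR hf).iterate a hp1, ?_⟩
    simp only [mem_iInter, mem_preimage] at hp2 ⊢
    intro i
    have hiter : f^[a*i] (f^[a] p) = f^[a*(i+1)] p := by
      rw [show a*(i+1) = a*i + a from by ring]
      exact (Function.iterate_add_apply f (a*i) a p).symm
    rw [hiter]
    exact hp2 (i+1)
  · -- ContinuousOn
    intro p hp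
    rw [continuousWithinAt_pi]
    intro i
    have hgc : Continuous (f^[a*i]) := hf.iterate _
    have memhyp : ∀ q : X, q ∈ CR f ∩ ⋂ i : ℕ, f^[a*i] ⁻¹' (closedBall x ε' ∪ closedBall y ε') →
        dist (f^[a*i] q) x ≤ ε' ∨ dist (f^[a*i] q) y ≤ ε' := by
      rintro q ⟨_, hq2⟩
      have := mem_iInter.mp hq2 i
      simpa [mem_preimage, mem_union, mem_closedBall] using this
    have key : ∀ u v : X, (dist u x ≤ ε' ∨ dist u y ≤ ε') → (dist v x ≤ ε' ∨ dist v y ≤ ε') →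
        dist u v < dist x y - 2*ε' → dist u y ≤ ε' → dist v y ≤ ε' := by
      intro u v hu hv huv huy
      rcases hv with hv | hv
      · exfalso
        have t1 : dist x y ≤ dist x v + dist v u + dist u y := dist_triangle4 _ _ _ _
        rw [dist_comm x v, dist_comm v u] at t1
        linarith
      · exact hv
    refine ContinuousWithinAt.congr_of_eventuallyEq
      (continuousWithinAt_const (b := decide (dist (f^[a*i] p) y ≤ ε'))) ?_ rfl
    have hev : ∀ᶠ q in nhdsWithin p (CR f ∩ ⋂ i : ℕ, f^[a*i] ⁻¹' (closedBall x ε' ∪ closedBall y ε')),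
        dist (f^[a*i] q) (f^[a*i] p) < dist x y - 2*ε' :=
      Filter.Eventually.filter_mono nhdsWithin_le_nhds
        (hgc.continuousAt.preimage_mem_nhds (Metric.ball_mem_nhds (f^[a*i] p) (by linarith)))
    filter_upwards [hev, eventually_mem_nhdsWithin] with q hq hqY
    have hpY := memhyp p hp
    have hqY' := memhyp q hqY
    apply decide_eq_decide.mpr
    constructor
    · exact key _ _ hqY' hpY hq
    · refine key _ _ hpY hqY' ?_
      rw [dist_comm]; exact hq
  · -- surjectivity
    intro s
    have horbCR : ∀ j : ℕ, C (s (j / a)) (s (j / a + 1)) (j % a) ∈ CR f :=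
      fun j => hCCR _ _ _ (Nat.mod_lt j ha0).le
    have horbchain : ∀ j : ℕ, dist (f (C (s (j / a)) (s (j / a + 1)) (j % a)))
        (C (s ((j+1) / a)) (s ((j+1) / a + 1)) ((j+1) % a)) ≤ δ := by
      intro j
      obtain ⟨q, r, hr, hj⟩ : ∃ q r, r < a ∧ j = a * q + r :=
        ⟨j / a, j % a, Nat.mod_lt j ha0, (Nat.div_add_mod j a).symm⟩
      have hdiv : j / a = q := by rw [hj, Nat.mul_add_div ha0, Nat.div_eq_of_lt hr, add_zero]
      have hmod : j % a = r := by rw [hj, Nat.mul_add_mod, Nat.mod_eq_of_lt hr]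
      rcases lt_or_eq_of_le (Nat.succ_le_of_lt hr) with h1 | h1
      · have hdiv1 : (j+1) / a = q := by
          rw [show j+1 = a*q+(r+1) by omega, Nat.mul_add_div ha0, Nat.div_eq_of_lt h1, add_zero]
        have hmod1 : (j+1) % a = r+1 := by
          rw [show j+1 = a*q+(r+1) by omega, Nat.mul_add_mod, Nat.mod_eq_of_lt h1]
        rw [hdiv, hmod, hdiv1, hmod1]
        exact hCchain _ _ r (by omega)
      · have hja : j + 1 = a * (q+1) := by rw [Nat.mul_succ]; omega
        have hdiv1 : (j+1) / a = q+1 := by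
          rw [hja, Nat.mul_div_cancel_left _ ha0]
        have hmod1 : (j+1) % a = 0 := by
          rw [hja, Nat.mul_mod_right]
        rw [hdiv, hmod, hdiv1, hmod1, hC0]
        have h2 := hCchain (s q) (s (q+1)) r (by omega)
        rwa [show r + 1 = a from h1, hCa] at h2
    obtain ⟨p, hpCR, hps⟩ := hshad (fun j => C (s (j / a)) (s (j / a + 1)) (j % a)) horbCR horbchain
    have hkey : ∀ i, dist (f^[a*i] p) (z (s i)) ≤ ε' := by
      intro i
      have hh := hps (a*i)
      have hdiv : (a*i) / a = i := Nat.mul_div_cancel_left i ha0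
      have hmod : (a*i) % a = 0 := Nat.mul_mod_right a i
      simp only [hdiv, hmod, hC0] at hh
      exact hh
    refine ⟨p, ⟨hpCR, ?_⟩, ?_⟩
    · simp only [mem_iInter, mem_preimage, mem_union, mem_closedBall]
      intro i
      have hh := hkey i
      cases hsi : s i
      · left; rw [hsi, hzf] at hh; exact hh
      · right; rw [hsi, hzt] at hh; exact hh
    · funext i
      have hh := hkey i
      cases hsi : s i
      · rw [hsi, hzf] at hh
        apply decide_eq_false
        intro hle
        have t1 : dist x y ≤ dist x (f^[a*i] p) + dist (f^[a*i] p) y := dist_triangle _ _ _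
        have t2 : dist x (f^[a*i] p) = dist (f^[a*i] p) x := dist_comm _ _
        linarith
      · rw [hsi, hzt] at hh
        exact decide_eq_true hh
  · -- shift commuting
    intro p _
    funext i
    have hiter : f^[a*i] (f^[a] p) = f^[a*(i+1)] p := by
      rw [show a*(i+1) = a*i + a from by ring]
      exact (Function.iterate_add_apply f (a*i) a p).symm
    show decide (dist (f^[a*i] (f^[a] p)) y ≤ ε') = decide (dist (f^[a*(i+1)] p) y ≤ ε')
    rw [hiter]
  · -- preimage of 0^∞
    rintro p ⟨hp1, hp2⟩ hπp
    have h0 : decide (dist (f^[a*0] p) y ≤ ε') = false := congrFun hπp 0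
    have hp' := mem_iInter.mp hp2 0
    simp only [Nat.mul_zero, Function.iterate_zero, id_eq, mem_preimage, mem_union] at h0 hp'
    have hnot : ¬ dist p y ≤ ε' := of_decide_eq_false h0
    rcases hp' with hp' | hp'
    · exact mem_ball.mpr (lt_of_le_of_lt (mem_closedBall.mp hp') hε'ε)
    · exact absurd (mem_closedBall.mp hp') hnot
  · -- preimage of 1^∞
    rintro p ⟨hp1, hp2⟩ hπp
    have h0 : decide (dist (f^[a*0] p) y ≤ ε') = true := congrFun hπp 0
    simp only [Nat.mul_zero, Function.iterate_zero, id_eq] at h0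
    exact mem_ball.mpr (lt_of_le_of_lt (of_decide_eq_true h0) hε'ε)
end
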